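/- Let m ≥ 3 be an integer and k > 0 a real number with 4k > (m−2)². Then every nontrivial solution H of the linear ODE H''(x) − (m−2) coth(x) H'(x) + 2k H(x) = 0 on (0,∞) with H(x)/x^{m−1} → 1 as x → 0⁺ has infinitely many zeros on (0,∞). -/

import Mathlib

open Real Set Filter Topology

lemma aux_le (f f' : ℝ → ℝ) (r a : ℝ)
    (hf : ∀ x ∈ Ici a, HasDerivAt f (f' x) x)
    (hb : ∀ x ∈ Ici a, f' x ≤ r) :
    ∀ x ∈ Ici a, f x ≤ f a + r * (x - a) := by
  intro x hx
  set g : ℝ → ℝ := fun y => f y - r * y with hg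
  have hg' : ∀ y ∈ Ici a, HasDerivAt g (f' y - r) y := fun y hy => by
    have h := (hf y hy).sub ((hasDerivAt_id y).const_mul r)
    simp only [id_eq, mul_one] at h
    exact h
  have hanti : AntitoneOn g (Ici a) := by
    apply antitoneOn_of_deriv_nonpos (convex_Ici a)
    · exact fun y hy => ((hg' y hy).continuousAt).continuousWithinAt
    · exact fun y hy => ((hg' y (interior_subset hy)).differentiableAt).differentiableWithinAt
    · intro y hy
      rw [(hg' y (interior_subset hy)).deriv]
      linarith [hb y (interior_subset hy)]
  have := hanti (self_mem_Ici) hx hx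
  simp only [hg] at this
  linarith

lemma aux_ge (f f' : ℝ → ℝ) (r a : ℝ)
    (hf : ∀ x ∈ Ici a, HasDerivAt f (f' x) x)
    (hb : ∀ x ∈ Ici a, r ≤ f' x) :
    ∀ x ∈ Ici a, f a + r * (x - a) ≤ f x := by
  intro x hx
  have := aux_le (fun y => -f y) (fun y => -f' y) (-r) a
    (fun y hy => (hf y hy).neg) (fun y hy => by simpa using hb y hy) x hx
  linarith

/-- Oscillation of the higher-dimensional linearized equation (42): for integer
`m ≥ 3` and real `k > 0` with `4k > (m-2)²`, the solution of
`H'' - (m-2) coth(x) H' + 2k H = 0` on `(0,∞)` with `H(x) ~ x^(m-1)` near `0`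
has infinitely many zeros. -/
theorem higher_dimensional_linearized_solution_oscillates
    (m : ℕ) (hm : 3 ≤ m) (k : ℝ) (hk : 0 < k)
    (hosc : ((m : ℝ) - 2) ^ 2 < 4 * k)
    (H H' H'' : ℝ → ℝ)
    (hd1 : ∀ x ∈ Ioi (0:ℝ), HasDerivAt H (H' x) x)
    (hd2 : ∀ x ∈ Ioi (0:ℝ), HasDerivAt H' (H'' x) x)
    (hode : ∀ x ∈ Ioi (0:ℝ),
      H'' x - ((m : ℝ) - 2) * (Real.cosh x / Real.sinh x) * H' x + 2 * k * H x = 0)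
    (hasymp : Filter.Tendsto (fun x => H x / x ^ (m - 1)) (𝓝[>] (0:ℝ)) (𝓝 1)) :
    {x ∈ Ioi (0:ℝ) | H x = 0}.Infinite := by
  by_contra hcon
  have hfin : {x ∈ Ioi (0:ℝ) | H x = 0}.Finite := Set.not_infinite.mp hcon
  obtain ⟨B, hB⟩ := hfin.bddAbove
  set c : ℝ := (m : ℝ) - 2 with hc
  have hm3 : (3:ℝ) ≤ (m:ℝ) := by exact_mod_cast hm
  have hc1 : 1 ≤ c := by simp only [hc]; linarith
  have hc0 : 0 < c := by linarith
  set η : ℝ := min 1 ((4*k - c^2)/(3*c^2)) with hη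
  have hηpos : 0 < η := by
    apply lt_min one_pos
    apply div_pos (by nlinarith) (by nlinarith)
  have hη1 : η ≤ 1 := min_le_left _ _
  have hη2 : 3*c^2*η ≤ 4*k - c^2 := by
    have h : η ≤ (4*k - c^2)/(3*c^2) := by rw [hη]; exact min_le_right _ _
    rw [le_div_iff₀ (by nlinarith : (0:ℝ) < 3*c^2)] at h
    linarith
  set X₁ : ℝ := max (max (B+1) 1) (1 - Real.log η) with hX₁
  -- basic facts on Ici X₁
  have hmemIoi : ∀ x ∈ Ici X₁, x ∈ Ioi (0:ℝ) := by
    intro x hx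
    have h1 : (1:ℝ) ≤ x := le_trans (le_trans (le_max_right _ _) (le_max_left _ _)) hx
    exact lt_of_lt_of_le one_pos h1
  have hone : ∀ x ∈ Ici X₁, (1:ℝ) ≤ x := fun x hx =>
    le_trans (le_trans (le_max_right _ _) (le_max_left _ _)) hx
  have hHne : ∀ x ∈ Ici X₁, H x ≠ 0 := by
    intro x hx hzero
    have hxB : x ≤ B := hB ⟨hmemIoi x hx, hzero⟩
    have : B + 1 ≤ x := le_trans (le_trans (le_max_left _ _) (le_max_left _ _)) hx
    linarith
  have hsinh : ∀ x ∈ Ici X₁, 0 < Real.sinh x := fun x hx =>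
    Real.sinh_pos_iff.mpr (hmemIoi x hx)
  -- coth bound
  have hcoth_ub : ∀ x ∈ Ici X₁, Real.cosh x / Real.sinh x ≤ 1 + η := by
    intro x hx
    have hs := hsinh x hx
    have hs1 : 1 ≤ Real.sinh x := by
      have := Real.self_lt_sinh_iff.mpr (hmemIoi x hx)
      linarith [hone x hx]
    have hexp : Real.exp (-x) ≤ η := by
      have hxl : 1 - Real.log η ≤ x := le_trans (le_max_right _ _) hx
      have : Real.exp (-x) ≤ Real.exp (Real.log η) := by
        apply Real.exp_le_exp.mpr; linarith
      rwa [Real.exp_log hηpos] at this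
    have hcs : Real.cosh x = Real.sinh x + Real.exp (-x) := by
      have := Real.cosh_sub_sinh x
      linarith
    rw [hcs, div_le_iff₀ hs]
    nlinarith
  have hcoth_pos : ∀ x ∈ Ici X₁, 0 < Real.cosh x / Real.sinh x := fun x hx =>
    div_pos (Real.cosh_pos x) (hsinh x hx)
  have ha_sq : ∀ x ∈ Ici X₁, (c * (Real.cosh x / Real.sinh x))^2 ≤ 4*k := by
    intro x hx
    have h1 := hcoth_ub x hx
    have h2 := hcoth_pos x hx
    have h3 : (Real.cosh x / Real.sinh x)^2 ≤ (1+η)^2 := by nlinarith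
    have h4 : c^2*η^2 ≤ c^2*η := by nlinarith [mul_nonneg (sq_nonneg c) (mul_nonneg hηpos.le (sub_nonneg.mpr hη1))]
    have h5 : c^2*(1+η)^2 ≤ 4*k := by nlinarith
    have h6 : c^2*(Real.cosh x / Real.sinh x)^2 ≤ c^2*(1+η)^2 :=
      mul_le_mul_of_nonneg_left h3 (sq_nonneg c)
    calc (c * (Real.cosh x / Real.sinh x))^2 = c^2*(Real.cosh x / Real.sinh x)^2 := by ring
      _ ≤ 4*k := le_trans h6 h5
  -- Riccati variable
  set W : ℝ → ℝ := fun x => H' x / H x with hWdef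
  set W' : ℝ → ℝ := fun x => (H'' x * H x - H' x * H' x) / (H x)^2 with hW'def
  have hdW : ∀ x ∈ Ici X₁, HasDerivAt W (W' x) x := by
    intro x hx
    exact (hd2 x (hmemIoi x hx)).div (hd1 x (hmemIoi x hx)) (hHne x hx)
  have hWeq : ∀ x ∈ Ici X₁,
      W' x = c * (Real.cosh x / Real.sinh x) * W x - 2*k - (W x)^2 := by
    intro x hx
    have hode' := hode x (hmemIoi x hx)
    have hH'' : H'' x = c * (Real.cosh x / Real.sinh x) * H' x - 2*k*H x := by
      linarith
    have hH : H x ≠ 0 := hHne x hx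
    have hs : Real.sinh x ≠ 0 := (hsinh x hx).ne'
    simp only [hW'def, hWdef]
    rw [hH'']
    field_simp
  have hW'le : ∀ x ∈ Ici X₁, W' x ≤ -k := by
    intro x hx
    rw [hWeq x hx]
    nlinarith [sq_nonneg (2 * W x - c * (Real.cosh x / Real.sinh x)), ha_sq x hx]
  have hW'le2 : ∀ x ∈ Ici X₁, W x ≤ 0 → W' x ≤ -(W x)^2 := by
    intro x hx hWx
    rw [hWeq x hx]
    have : c * (Real.cosh x / Real.sinh x) * W x ≤ 0 :=
      mul_nonpos_of_nonneg_of_nonpos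
        (le_of_lt (mul_pos hc0 (hcoth_pos x hx))) hWx
    linarith
  -- drive W below -1
  set x₂ : ℝ := X₁ + (|W X₁| + 1)/k with hx₂def
  have hx₂ : X₁ ≤ x₂ := by
    have h0 : 0 ≤ (|W X₁| + 1)/k := by positivity
    rw [hx₂def]; linarith
  have hIci : Ici x₂ ⊆ Ici X₁ := Ici_subset_Ici.mpr hx₂
  have hWx₂ : W x₂ ≤ -1 := by
    have h := aux_le W W' (-k) X₁ hdW hW'le x₂ hx₂
    have hcalc : (-k) * (x₂ - X₁) = -(|W X₁| + 1) := by
      have hd : x₂ - X₁ = (|W X₁| + 1)/k := by rw [hx₂def]; ring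
      rw [hd]
      field_simp
    rw [hcalc] at h
    have := le_abs_self (W X₁)
    linarith
  have hWneg : ∀ x ∈ Ici x₂, W x ≤ -1 := by
    intro x hx
    have h := aux_le W W' (-k) x₂ (fun y hy => hdW y (hIci hy))
      (fun y hy => hW'le y (hIci hy)) x hx
    have hx' : x₂ ≤ x := hx
    have hnp : (-k) * (x - x₂) ≤ 0 :=
      mul_nonpos_of_nonpos_of_nonneg (by linarith) (by linarith)
    linarith
  -- inverse blows up
  set V : ℝ → ℝ := fun x => (W x)⁻¹ with hVdef
  set V' : ℝ → ℝ := fun x => -W' x / (W x)^2 with hV'def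
  have hWne : ∀ x ∈ Ici x₂, W x ≠ 0 := fun x hx => by
    have := hWneg x hx; intro h; rw [h] at this; linarith
  have hdV : ∀ x ∈ Ici x₂, HasDerivAt V (V' x) x := fun x hx =>
    (hdW x (hIci hx)).inv (hWne x hx)
  have hV'ge : ∀ x ∈ Ici x₂, (1:ℝ) ≤ V' x := by
    intro x hx
    have hWx := hWneg x hx
    have hW2 : 0 < (W x)^2 := by nlinarith
    have h2 := hW'le2 x (hIci hx) (by linarith)
    simp only [hV'def]
    rw [le_div_iff₀ hW2]
    linarith
  have hmem2 : x₂ + 2 ∈ Ici x₂ := by simp only [mem_Ici]; linarith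
  have hVgrow := aux_ge V V' 1 x₂ hdV hV'ge (x₂ + 2) hmem2
  have hVx₂ : -1 ≤ V x₂ := by
    have hw : W x₂ ≤ -1 := hWx₂
    have hwneg : W x₂ < 0 := by linarith
    simp only [hVdef]
    rw [inv_eq_one_div, le_div_iff_of_neg hwneg]
    linarith
  have hVneg : V (x₂ + 2) < 0 := by
    have h := hWneg (x₂+2) hmem2
    simp only [hVdef]
    exact inv_lt_zero.mpr (by linarith)
  have : (1:ℝ) * (x₂ + 2 - x₂) = 2 := by ring
  linarith [hVgrow]
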